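/- For every d ∈ ℕ, the (d+1)×(d+1) Hankel matrix with (i,j)-entry 2^{−2(i+j)}·C(2(i+j), i+j) (the coefficients of 1/√(1−x)) is invertible. -/

import Mathlib

open Finset

private lemma key_nat (d i j : ℕ) (hi : i ≤ d) (hj : j ≤ d) :
    (2 * (i + j)).choose (i + j) =
      (2 * i).choose i * (2 * j).choose j +
        2 * ∑ k ∈ range d, (2 * i).choose (i + (k + 1)) * (2 * j).choose (j + (k + 1)) := by
  have hvdm : (2 * (i + j)).choose (i + j) =
      ∑ t ∈ range (i + j + 1), (2 * i).choose t * (2 * j).choose (i + j - t) := by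
    rw [show 2 * (i + j) = 2 * i + 2 * j by ring, Nat.add_choose_eq,
      Finset.Nat.sum_antidiagonal_eq_sum_range_succ_mk]
  rw [hvdm, show i + j + 1 = (i + 1) + j by ring, Finset.sum_range_add]
  have h1 : ∑ t ∈ range (i + 1), (2 * i).choose t * (2 * j).choose (i + j - t) =
      (2 * i).choose i * (2 * j).choose j +
        ∑ k ∈ range d, (2 * i).choose (i + (k + 1)) * (2 * j).choose (j + (k + 1)) := by
    rw [← Finset.sum_range_reflect, Finset.sum_range_succ']
    have e0 : (2 * i).choose (i + 1 - 1 - 0) * (2 * j).choose (i + j - (i + 1 - 1 - 0)) =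
        (2 * i).choose i * (2 * j).choose j := by
      congr 1 <;> congr 1 <;> omega
    rw [e0]
    have h2 : ∑ k ∈ range i, (2 * i).choose (i + 1 - 1 - (k + 1)) *
          (2 * j).choose (i + j - (i + 1 - 1 - (k + 1))) =
        ∑ k ∈ range d, (2 * i).choose (i + (k + 1)) * (2 * j).choose (j + (k + 1)) := by
      rw [show (∑ k ∈ range i, (2 * i).choose (i + 1 - 1 - (k + 1)) *
          (2 * j).choose (i + j - (i + 1 - 1 - (k + 1)))) =
          ∑ k ∈ range i, (2 * i).choose (i + (k + 1)) * (2 * j).choose (j + (k + 1)) from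
        Finset.sum_congr rfl fun k hk => by
          rw [Finset.mem_range] at hk
          have e1 : i + 1 - 1 - (k + 1) = 2 * i - (i + (k + 1)) := by omega
          have e2 : i + j - (i + 1 - 1 - (k + 1)) = j + (k + 1) := by omega
          rw [e2, e1, Nat.choose_symm (by omega)]]
      refine Finset.sum_subset (Finset.range_subset_range.2 hi) fun k hk hk' => ?_
      rw [Finset.mem_range] at hk hk'
      rw [Nat.choose_eq_zero_of_lt (by omega), zero_mul]
    rw [h2]; ring
  have h3 : ∑ k ∈ range j, (2 * i).choose (i + 1 + k) * (2 * j).choose (i + j - (i + 1 + k)) =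
      ∑ k ∈ range d, (2 * i).choose (i + (k + 1)) * (2 * j).choose (j + (k + 1)) := by
    rw [show (∑ k ∈ range j, (2 * i).choose (i + 1 + k) *
        (2 * j).choose (i + j - (i + 1 + k))) =
        ∑ k ∈ range j, (2 * i).choose (i + (k + 1)) * (2 * j).choose (j + (k + 1)) from
      Finset.sum_congr rfl fun k hk => by
        rw [Finset.mem_range] at hk
        have e1 : i + 1 + k = i + (k + 1) := by omega
        have e2 : i + j - (i + 1 + k) = 2 * j - (j + (k + 1)) := by omega
        rw [e2, e1, Nat.choose_symm (by omega)]]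
    refine Finset.sum_subset (Finset.range_subset_range.2 hj) fun k hk hk' => ?_
    rw [Finset.mem_range] at hk hk'
    rw [Nat.choose_eq_zero_of_lt (show 2 * j < j + (k + 1) by omega), mul_zero]
  rw [h1, h3]; ring

/-- The `(d+1)×(d+1)` Hankel matrix of the coefficients `2^{-2k} C(2k,k)` of
`1/√(1-x)` is invertible. -/
theorem gOneHalf_hankel_invertible (d : ℕ) :
    IsUnit (Matrix.of fun (i j : Fin (d + 1)) =>
        (Nat.choose (2 * ((i : ℕ) + j)) ((i : ℕ) + j) : ℝ) / 2 ^ (2 * ((i : ℕ) + j))) := by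
  set B : Matrix (Fin (d + 1)) (Fin (d + 1)) ℝ :=
    Matrix.of fun i k => ((2 * (i : ℕ)).choose ((i : ℕ) + k) : ℝ) / 4 ^ (i : ℕ) with hB
  set D : Matrix (Fin (d + 1)) (Fin (d + 1)) ℝ :=
    Matrix.diagonal fun k => if (k : ℕ) = 0 then (1 : ℝ) else 2 with hD
  have hBu : IsUnit B := by
    have hT : Matrix.BlockTriangular B.transpose id := by
      intro i j hij
      simp only [hB, Matrix.transpose_apply, Matrix.of_apply, id] at hij ⊢
      rw [Nat.choose_eq_zero_of_lt (by omega), Nat.cast_zero, zero_div]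
    rw [Matrix.isUnit_iff_isUnit_det _, ← Matrix.det_transpose,
      Matrix.det_of_upperTriangular hT]
    refine isUnit_iff_ne_zero.2 (Finset.prod_ne_zero_iff.2 fun i _ => ?_)
    simp only [hB, Matrix.transpose_apply, Matrix.of_apply]
    rw [show (i : ℕ) + (i : ℕ) = 2 * (i : ℕ) by ring, Nat.choose_self]
    positivity
  have hDu : IsUnit D := by
    rw [Matrix.isUnit_iff_isUnit_det _, Matrix.det_diagonal]
    refine isUnit_iff_ne_zero.2 (Finset.prod_ne_zero_iff.2 fun i _ => ?_)
    split <;> norm_num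
  have hEq : (Matrix.of fun (i j : Fin (d + 1)) =>
      (Nat.choose (2 * ((i : ℕ) + j)) ((i : ℕ) + j) : ℝ) / 2 ^ (2 * ((i : ℕ) + j)))
      = B * D * B.transpose := by
    ext i j
    rw [Matrix.mul_assoc, Matrix.mul_apply]
    have hterm : ∀ k : Fin (d + 1), (D * B.transpose) k j = (if (k : ℕ) = 0 then (1 : ℝ) else 2) *
        (((2 * (j : ℕ)).choose ((j : ℕ) + k) : ℝ) / 4 ^ (j : ℕ)) := by
      intro k
      rw [hD, Matrix.diagonal_mul, Matrix.transpose_apply]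
      rfl
    simp only [hterm]
    simp only [hB, Matrix.of_apply]
    rw [Fin.sum_univ_eq_sum_range
      (fun k => ((2 * (i : ℕ)).choose ((i : ℕ) + k) : ℝ) / 4 ^ (i : ℕ) *
        ((if k = 0 then (1 : ℝ) else 2) * (((2 * (j : ℕ)).choose ((j : ℕ) + k) : ℝ) / 4 ^ (j : ℕ)))),
      Finset.sum_range_succ']
    have key := key_nat d i j (by omega) (by omega)
    have h4 : (2 : ℝ) ^ (2 * ((i : ℕ) + (j : ℕ))) = 4 ^ (i : ℕ) * 4 ^ (j : ℕ) := by
      rw [show (4 : ℝ) = 2 ^ 2 by norm_num, ← pow_mul, ← pow_mul, ← pow_add]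
      ring_nf
    rw [h4]
    have h40 : (4 : ℝ) ^ (i : ℕ) ≠ 0 := by positivity
    have h41 : (4 : ℝ) ^ (j : ℕ) ≠ 0 := by positivity
    field_simp
    push_cast [key]
    rw [Finset.mul_sum, add_comm]
    congr 1
    rw [Finset.mul_sum]
    exact Finset.sum_congr rfl fun k hk => by
      rw [mul_div_assoc', mul_div_cancel_left₀ _ (mul_ne_zero h40 h41)]; ring
    simp
  rw [hEq]
  exact (hBu.mul hDu).mul ((Matrix.isUnit_iff_isUnit_det _).2
    (by rw [Matrix.det_transpose]; exact (Matrix.isUnit_iff_isUnit_det _).1 hBu))
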